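/- arXiv:1604.00346 — 8 statements merged into one kernel-verified Lean document; each statement's English description precedes it below -/
import Mathlib

section
/- Last activated write determines the variant: for every base program B : α → Option β, every list L of conditional delta operations, every product p : ρ, and every reference k : α, the value variant B L p k equals the payload of the last operation of L whose reference equals k and whose activation condition holds at p, if such an operation exists, and equals B k otherwise. Formally (using classical decidability for the filter): variant B L p k = Option.elim ((L.filter (fun op => op.2.1 = k ∧ op.1 p)).getLast?) (B k) (fun op => op.2.2). -/
open Classical in
/-- The variant generated for product `p` from base program `B` and list `L` of
conditional delta operations. -/
noncomputable def variant {α β ρ : Type*} (B : α → Option β)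
    (L : List ((ρ → Prop) × α × Option β)) (p : ρ) : α → Option β :=
  L.foldl (fun P op => if op.1 p then Function.update P op.2.1 op.2.2 else P) B

open Classical in
/-- Last activated write determines the variant. -/
theorem variant_eq_getLast_filter {α β ρ : Type*} (B : α → Option β)
    (L : List ((ρ → Prop) × α × Option β)) (p : ρ) (k : α) :
    variant B L p k =
      ((L.filter (fun op => decide (op.2.1 = k ∧ op.1 p))).getLast?).elim
        (B k) (fun op => op.2.2) := by
  induction L using List.reverseRecOn with
  | nil => simp [variant]
  | append_singleton L op ih =>
    have hvar : variant B (L ++ [op]) p k =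
        (if op.1 p then Function.update (variant B L p) op.2.1 op.2.2
         else variant B L p) k := by
      simp only [variant, List.foldl_append, List.foldl_cons, List.foldl_nil]
    rw [hvar, List.filter_append]
    by_cases hc : op.1 p
    · by_cases hk : op.2.1 = k
      · have hd : decide (op.2.1 = k ∧ op.1 p) = true := by simp [hk, hc]
        rw [List.filter_singleton, hd, cond_true, List.getLast?_concat]
        simp [if_pos hc, ← hk]
      · have hd : decide (op.2.1 = k ∧ op.1 p) = false := by simp [hk]
        rw [List.filter_singleton, hd, cond_false, List.append_nil,
          if_pos hc, Function.update_of_ne (Ne.symm hk)]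
        exact ih
    · have hd : decide (op.2.1 = k ∧ op.1 p) = false := by simp [hc]
      rw [List.filter_singleton, hd, cond_false, List.append_nil, if_neg hc]
      exact ih
end

section
/- Unambiguity / order-independence of variant generation: let L and L' be lists of conditional delta operations of the same length and suppose there is a bijection σ : Fin L.length ≃ Fin L'.length such that L'.get (σ i) = L.get i for all i, and such that σ preserves the relative order of operations acting on the same reference, i.e. whenever i < j and (L.get i).2.1 = (L.get j).2.1, then σ i < σ j. Then for every base program B and every product p, variant B L' p = variant B L p. -/
open Classical in
/-- One-value step: effect of an op on the value stored at reference `a`. -/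
noncomputable def vstep {α β ρ : Type*} (a : α) (p : ρ) (v : Option β)
    (op : (ρ → Prop) × α × Option β) : Option β :=
  if op.1 p ∧ op.2.1 = a then op.2.2 else v

lemma variant_apply {α β ρ : Type*} (a : α) (p : ρ)
    (L : List ((ρ → Prop) × α × Option β)) :
    ∀ (B : α → Option β) (v : Option β), B a = v →
      variant B L p a = L.foldl (vstep a p) v := by
  classical
  induction L with
  | nil => intro B v h; simpa [variant] using h
  | cons op L ih =>
    intro B v h
    simp only [variant, List.foldl_cons] at *
    apply ih
    unfold vstep
    by_cases h1 : op.1 p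
    · by_cases h2 : op.2.1 = a
      · subst h2; simp [h1]
      · rw [if_pos h1, if_neg (fun hh => h2 hh.2),
          Function.update_of_ne (fun hh => h2 hh.symm)]
        exact h
    · simp [h1, h]

lemma foldl_vstep_none {α β ρ : Type*} (a : α) (p : ρ)
    (L : List ((ρ → Prop) × α × Option β))
    (h : ∀ op ∈ L, ¬(op.1 p ∧ op.2.1 = a)) (v : Option β) :
    L.foldl (vstep a p) v = v := by
  induction L generalizing v with
  | nil => rfl
  | cons op L ih =>
    rw [List.foldl_cons]
    rw [ih (fun o ho => h o (List.mem_cons_of_mem _ ho))]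
    unfold vstep
    rw [if_neg (h op List.mem_cons_self)]

lemma foldl_vstep_last {α β ρ : Type*} (a : α) (p : ρ)
    (L : List ((ρ → Prop) × α × Option β)) (i₀ : Fin L.length)
    (hq : (L.get i₀).1 p ∧ (L.get i₀).2.1 = a)
    (hmax : ∀ i : Fin L.length, i₀ < i → ¬((L.get i).1 p ∧ (L.get i).2.1 = a))
    (v : Option β) :
    L.foldl (vstep a p) v = (L.get i₀).2.2 := by
  conv_lhs => rw [← List.take_append_drop (i₀ + 1) L]
  rw [List.foldl_append]
  have hdrop : ∀ op ∈ L.drop (i₀ + 1), ¬(op.1 p ∧ op.2.1 = a) := by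
    intro op hop
    obtain ⟨j, hj⟩ := List.get_of_mem hop
    have hjl : (i₀ : ℕ) + 1 + (j : ℕ) < L.length := by
      have := j.isLt
      simp [List.length_drop] at this
      omega
    have : op = L.get ⟨i₀ + 1 + j, hjl⟩ := by
      rw [← hj]
      simp [List.getElem_drop]
    rw [this]
    exact hmax ⟨i₀ + 1 + j, hjl⟩ (by simp [Fin.lt_def]; omega)
  rw [foldl_vstep_none a p _ hdrop]
  have htake : L.take (i₀ + 1) = L.take i₀ ++ [L.get i₀] := by
    rw [← List.take_concat_get]
    · simp
    · exact i₀.isLt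
  rw [htake, List.foldl_append, List.foldl_cons, List.foldl_nil]
  unfold vstep
  rw [if_pos hq]

/-- Unambiguity / order-independence of variant generation: permuting the list of
conditional delta operations while preserving the relative order of operations
acting on the same reference does not change the generated variants. -/
theorem variant_perm_invariant {α β ρ : Type*}
    (L L' : List ((ρ → Prop) × α × Option β))
    (hlen : L.length = L'.length)
    (σ : Fin L.length ≃ Fin L'.length)
    (hget : ∀ i : Fin L.length, L'.get (σ i) = L.get i)
    (horder : ∀ i j : Fin L.length, i < j → (L.get i).2.1 = (L.get j).2.1 → σ i < σ j)
    (B : α → Option β) (p : ρ) :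
    variant B L' p = variant B L p := by
  funext a
  rw [variant_apply a p L B (B a) rfl, variant_apply a p L' B (B a) rfl]
  classical
  by_cases hex : ∃ i : Fin L.length, (L.get i).1 p ∧ (L.get i).2.1 = a
  · obtain ⟨i, hi⟩ := hex
    set S : Finset (Fin L.length) :=
      Finset.univ.filter (fun i => (L.get i).1 p ∧ (L.get i).2.1 = a) with hS
    have hSne : S.Nonempty := ⟨i, Finset.mem_filter.mpr ⟨Finset.mem_univ _, hi⟩⟩
    set i₀ := S.max' hSne with hi₀
    have hqi₀ : (L.get i₀).1 p ∧ (L.get i₀).2.1 = a :=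
      (Finset.mem_filter.mp (S.max'_mem hSne)).2
    have hmaxL : ∀ j : Fin L.length, i₀ < j → ¬((L.get j).1 p ∧ (L.get j).2.1 = a) := by
      intro j hj hqj
      have hmem : j ∈ S := Finset.mem_filter.mpr ⟨Finset.mem_univ _, hqj⟩
      exact absurd (S.le_max' j hmem) (not_le.mpr hj)
    have hq' : (L'.get (σ i₀)).1 p ∧ (L'.get (σ i₀)).2.1 = a := by
      rw [hget]; exact hqi₀
    have hmaxL' : ∀ j : Fin L'.length, σ i₀ < j →
        ¬((L'.get j).1 p ∧ (L'.get j).2.1 = a) := by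
      intro j hj hqj
      have hqj' : (L.get (σ.symm j)).1 p ∧ (L.get (σ.symm j)).2.1 = a := by
        rw [← hget (σ.symm j), Equiv.apply_symm_apply] at *
        exact hqj
      have hmem : σ.symm j ∈ S := Finset.mem_filter.mpr ⟨Finset.mem_univ _, hqj'⟩
      have hle : σ.symm j ≤ i₀ := S.le_max' _ hmem
      rcases lt_or_eq_of_le hle with hlt | heq
      · have := horder _ _ hlt (hqj'.2.trans hqi₀.2.symm)
        rw [Equiv.apply_symm_apply] at this
        exact absurd hj (not_lt.mpr this.le)
      · have hji : σ i₀ = j := by rw [← heq, Equiv.apply_symm_apply]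
        rw [hji] at hj
        exact lt_irrefl _ hj
    rw [foldl_vstep_last a p L i₀ hqi₀ hmaxL,
        foldl_vstep_last a p L' (σ i₀) hq' hmaxL', hget]
  · have hL : ∀ op ∈ L, ¬(op.1 p ∧ op.2.1 = a) := by
      intro op hop hq
      obtain ⟨j, hj⟩ := List.get_of_mem hop
      exact hex ⟨j, hj ▸ hq⟩
    have hL' : ∀ op ∈ L', ¬(op.1 p ∧ op.2.1 = a) := by
      intro op hop hq
      obtain ⟨j, hj⟩ := List.get_of_mem hop
      refine hex ⟨σ.symm j, ?_⟩
      rw [← hget (σ.symm j), Equiv.apply_symm_apply]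
      exact hj ▸ hq
    rw [foldl_vstep_none a p L hL, foldl_vstep_none a p L' hL']
end

section
/- Correctness of product-line projection: let Π : Set ρ be a set of products and let L' be obtained from L by deleting every operation whose activation condition fails at every product of Π, i.e. (using classical decidability) L' := L.filter (fun op => ∃ p ∈ Π, op.1 p). Then for every base program B and every p ∈ Π, variant B L' p = variant B L p. -/
open Classical in
/-- Correctness of product-line projection: dropping the operations that are never
activated on the products of `S` does not change the variants of products in `S`. -/
theorem variant_projection {α β ρ : Type*} (S : Set ρ)
    (L : List ((ρ → Prop) × α × Option β)) (B : α → Option β) :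
    ∀ p ∈ S,
      variant B (L.filter (fun op => decide (∃ q ∈ S, op.1 q))) p = variant B L p := by
  induction L generalizing B with
  | nil => intro p hp; rfl
  | cons op L ih =>
    intro p hp
    by_cases h : ∃ q ∈ S, op.1 q
    · rw [List.filter_cons, if_pos (by simpa using h)]
      simp only [variant, List.foldl_cons]
      exact ih _ p hp
    · rw [List.filter_cons, if_neg (by simpa using h)]
      have hop : ¬ op.1 p := fun hc => h ⟨p, hp, hc⟩
      simp only [variant, List.foldl_cons, if_neg hop]
      exact ih _ p hp
end

section
/- One-step elimination of a remove operation (correctness of manageOperation in the increasing refactoring): suppose L = L₁ ++ [(c₁, e, none)] ++ L₂, where (c₁, e, none) is a remove on reference e. Let L₁' be obtained from L₁ by replacing every operation (c, e, o) whose reference is e by (fun q => c q ∧ ¬ c₁ q, e, o), leaving operations on other references unchanged. Then for every base program B and every product p: variant B L p = variant (Function.update B e none) (((fun q => ¬ c₁ q), e, B e) :: (L₁' ++ L₂)) p. -/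
open Classical in
private theorem key {α β ρ : Type*} (c₁ : ρ → Prop) (e : α) (p : ρ) :
    ∀ (L₁ : List ((ρ → Prop) × α × Option β)) (B : α → Option β),
    variant B (L₁ ++ [(c₁, e, (none : Option β))]) p =
      variant (Function.update B e none)
        (((fun q => ¬ c₁ q), e, B e) ::
          L₁.map (fun op => if op.2.1 = e then ((fun q => op.1 q ∧ ¬ c₁ q), e, op.2.2) else op)) p := by
  intro L₁
  induction L₁ with
  | nil =>
    intro B
    by_cases h : c₁ p <;> simp [variant, h, Function.update_idem, Function.update_eq_self]
  | cons op L₁ ih =>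
    intro B
    have IH := ih (if op.1 p then Function.update B op.2.1 op.2.2 else B)
    simp only [variant, List.cons_append, List.foldl_cons, List.map_cons] at IH ⊢
    rw [IH]
    by_cases h : c₁ p
    · by_cases he : op.2.1 = e
      · subst he
        by_cases ho : op.1 p <;>
          simp [h, ho, Function.update_idem]
      · by_cases ho : op.1 p <;>
          simp [h, he, ho, Function.update_comm he, Function.update_of_ne he]
    · by_cases he : op.2.1 = e
      · subst he
        by_cases ho : op.1 p <;>
          simp [h, ho, Function.update_idem, Function.update_eq_self, Function.update_self]
      · by_cases ho : op.1 p <;>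
          simp [h, he, ho, Function.update_idem, Function.update_eq_self,
            Function.update_of_ne he]

open Classical in
/-- One-step elimination of a remove operation (correctness of `manageOperation`
in the increasing refactoring). -/
theorem remove_elimination {α β ρ : Type*} (B : α → Option β)
    (L₁ L₂ : List ((ρ → Prop) × α × Option β)) (c₁ : ρ → Prop) (e : α) (p : ρ) :
    variant B (L₁ ++ [(c₁, e, (none : Option β))] ++ L₂) p =
      variant (Function.update B e none)
        (((fun q => ¬ c₁ q), e, B e) ::
          ((L₁.map (fun op =>
              if op.2.1 = e then ((fun q => op.1 q ∧ ¬ c₁ q), e, op.2.2) else op)) ++ L₂)) p := by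
  have h1 : variant B (L₁ ++ [(c₁, e, (none : Option β))] ++ L₂) p =
      variant (variant B (L₁ ++ [(c₁, e, (none : Option β))]) p) L₂ p := by
    simp [variant, List.foldl_append]
  have h2 : variant (Function.update B e none)
        (((fun q => ¬ c₁ q), e, B e) ::
          ((L₁.map (fun op =>
              if op.2.1 = e then ((fun q => op.1 q ∧ ¬ c₁ q), e, op.2.2) else op)) ++ L₂)) p =
      variant (variant (Function.update B e none)
        (((fun q => ¬ c₁ q), e, B e) ::
          (L₁.map (fun op =>
              if op.2.1 = e then ((fun q => op.1 q ∧ ¬ c₁ q), e, op.2.2) else op))) p) L₂ p := by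
    simp [variant, List.foldl_append]
  rw [h1, h2, key c₁ e p L₁ B]
end

section
/- Guarding removes that precede an add (correctness of mergeOperations in the decreasing refactoring): suppose L = L₁ ++ [(c₁, e, some d)] ++ L₂, where (c₁, e, some d) is an add on reference e. Let L₁' be obtained from L₁ by replacing every remove on reference e, i.e. every operation of the form (c, e, none), by (fun q => c q ∧ ¬ c₁ q, e, none), leaving all other operations unchanged. Then for every base program B and every product p: variant B (L₁' ++ [(c₁, e, some d)] ++ L₂) p = variant B L p. -/
open Classical in
private theorem guard_aux_agree {α β ρ : Type*} (c₁ : ρ → Prop) (e : α) (p : ρ)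
    (L : List ((ρ → Prop) × α × Option β)) :
    ∀ B₁ B₂ : α → Option β, (∀ x, x ≠ e → B₁ x = B₂ x) →
    ∀ x, x ≠ e →
      (L.map (fun op =>
        if op.2.1 = e ∧ op.2.2 = none then ((fun q => op.1 q ∧ ¬ c₁ q), e, (none : Option β))
        else op)).foldl (fun P op => if op.1 p then Function.update P op.2.1 op.2.2 else P) B₁ x
      = L.foldl (fun P op => if op.1 p then Function.update P op.2.1 op.2.2 else P) B₂ x := by
  induction L with
  | nil => intro B₁ B₂ h x hx; exact h x hx
  | cons op L ih =>
    intro B₁ B₂ h x hx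
    simp only [List.map_cons, List.foldl_cons]
    refine ih _ _ ?_ x hx
    intro y hy
    by_cases hop : op.2.1 = e ∧ op.2.2 = none
    · simp only [if_pos hop]
      rw [hop.1]
      split <;> split <;> simp [Function.update_of_ne hy, h y hy]
    · simp only [if_neg hop]
      split
      · by_cases hye : y = op.2.1
        · subst hye; simp
        · simp [Function.update_of_ne hye, h y hy]
      · exact h y hy

open Classical in
private theorem guard_aux_eq {α β ρ : Type*} (c₁ : ρ → Prop) (e : α) (p : ρ)
    (hc : ¬ c₁ p) (L : List ((ρ → Prop) × α × Option β)) :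
    ∀ B : α → Option β,
      (L.map (fun op =>
        if op.2.1 = e ∧ op.2.2 = none then ((fun q => op.1 q ∧ ¬ c₁ q), e, (none : Option β))
        else op)).foldl (fun P op => if op.1 p then Function.update P op.2.1 op.2.2 else P) B
      = L.foldl (fun P op => if op.1 p then Function.update P op.2.1 op.2.2 else P) B := by
  induction L with
  | nil => intro B; rfl
  | cons op L ih =>
    intro B
    simp only [List.map_cons, List.foldl_cons]
    rw [ih]
    congr 1
    by_cases hop : op.2.1 = e ∧ op.2.2 = none
    · simp only [if_pos hop]
      rw [hop.1, hop.2]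
      by_cases hop1 : op.1 p
      · simp [hop1, hc]
      · simp [hop1]
    · simp only [if_neg hop]

open Classical in
/-- Guarding removes that precede an add (correctness of `mergeOperations` in the
decreasing refactoring). -/
theorem guard_removes_before_add {α β ρ : Type*} (B : α → Option β)
    (L₁ L₂ : List ((ρ → Prop) × α × Option β)) (c₁ : ρ → Prop) (e : α) (d : β) (p : ρ) :
    variant B
        ((L₁.map (fun op =>
            if op.2.1 = e ∧ op.2.2 = none then ((fun q => op.1 q ∧ ¬ c₁ q), e, (none : Option β))
            else op)) ++ [(c₁, e, some d)] ++ L₂) p =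
      variant B (L₁ ++ [(c₁, e, some d)] ++ L₂) p := by
  unfold variant
  rw [List.foldl_append, List.foldl_append, List.foldl_append, List.foldl_append]
  congr 1
  simp only [List.foldl_cons, List.foldl_nil]
  by_cases hc : c₁ p
  · rw [if_pos hc, if_pos hc]
    funext x
    by_cases hx : x = e
    · subst hx; simp
    · simp only [Function.update_of_ne hx]
      exact guard_aux_agree c₁ e p L₁ B B (fun _ _ => rfl) x hx
  · rw [if_neg hc, if_neg hc]
    exact guard_aux_eq c₁ e p hc L₁ B
end

section
/- One-step elimination of a first add on a reference absent from the base (correctness of mergeToBase in the decreasing refactoring): suppose B e = none and L = L₁ ++ [(c₁, e, some d)] ++ L₂, where L₁ contains no add on reference e (no operation of the form (c, e, some d')). Let L₁' be obtained from L₁ by replacing every operation (c, e, o) whose reference is e by (fun q => c q ∧ ¬ c₁ q, e, o). Then for every product p: variant B L p = variant (Function.update B e (some d)) (L₁' ++ [((fun q => ¬ c₁ q), e, none)] ++ L₂) p. -/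
open Classical in
private lemma aux_first_add {α β ρ : Type*} (p : ρ) (c₁ : ρ → Prop) (e : α) (d : β)
    (L₂ : List ((ρ → Prop) × α × Option β)) :
    ∀ (L₁ : List ((ρ → Prop) × α × Option β)),
      (∀ op ∈ L₁, op.2.1 = e → op.2.2 = none) →
      ∀ P Q : α → Option β, (∀ x, x ≠ e → P x = Q x) → P e = none →
        (c₁ p → Q e = some d) →
        variant P (L₁ ++ [(c₁, e, some d)] ++ L₂) p =
          variant Q ((L₁.map (fun op =>
              if op.2.1 = e then ((fun q => op.1 q ∧ ¬ c₁ q), e, op.2.2) else op)) ++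
            [((fun q => ¬ c₁ q), e, (none : Option β))] ++ L₂) p := by
  intro L₁
  induction L₁ with
  | nil =>
    intro _ P Q hPQ hPe hQe
    simp only [List.nil_append, List.map_nil, List.singleton_append, variant, List.foldl_cons]
    by_cases hc : c₁ p
    · rw [if_pos hc, if_neg (by simp [hc])]
      congr 1
      funext x
      by_cases hx : x = e
      · subst hx; simp [Function.update, hQe hc]
      · simp [Function.update, hx, hPQ x hx]
    · rw [if_neg hc, if_pos hc]
      congr 1
      funext x
      by_cases hx : x = e
      · subst hx; simp [Function.update, hPe]
      · simp [Function.update, hx, hPQ x hx]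
  | cons op L₁ ih =>
    intro hno P Q hPQ hPe hQe
    have hno' : ∀ op ∈ L₁, op.2.1 = e → op.2.2 = none := fun o ho => hno o (by simp [ho])
    simp only [List.cons_append, List.map_cons, variant, List.foldl_cons]
    by_cases hk : op.2.1 = e
    · -- op is a remove on e
      have ho : op.2.2 = none := hno op (by simp) hk
      rw [if_pos hk]
      have hPfix : (if op.1 p then Function.update P op.2.1 op.2.2 else P) = P := by
        by_cases hc : op.1 p
        · rw [if_pos hc]
          funext x
          by_cases hx : x = op.2.1
          · subst hx; simp [Function.update, ho, hk, hPe]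
          · simp [Function.update, hx]
        · rw [if_neg hc]
      rw [hPfix]
      by_cases hc1 : c₁ p
      · rw [if_neg (by simp [hc1])]
        exact ih hno' P Q hPQ hPe hQe
      · by_cases hc : op.1 p
        · rw [if_pos ⟨hc, hc1⟩]
          apply ih hno' P _ _ hPe (fun h => absurd h hc1)
          intro x hx
          simp [Function.update, hk, hx, hPQ x hx]
        · rw [if_neg (by simp [hc])]
          exact ih hno' P Q hPQ hPe hQe
    · rw [if_neg hk]
      by_cases hc : op.1 p
      · rw [if_pos hc, if_pos hc]
        apply ih hno'
        · intro x hx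
          by_cases hxk : x = op.2.1
          · subst hxk; simp [Function.update]
          · simp [Function.update, hxk, hPQ x hx]
        · simp [Function.update, Ne.symm hk, hPe]
        · intro h
          simpa [Function.update, Ne.symm hk] using hQe h
      · rw [if_neg hc, if_neg hc]
        exact ih hno' P Q hPQ hPe hQe

open Classical in
/-- One-step elimination of a first add on a reference absent from the base
(correctness of `mergeToBase` in the decreasing refactoring). -/
theorem first_add_to_base {α β ρ : Type*} (B : α → Option β)
    (L₁ L₂ : List ((ρ → Prop) × α × Option β)) (c₁ : ρ → Prop) (e : α) (d : β)
    (hB : B e = none)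
    (hL₁ : ∀ (c : ρ → Prop) (d' : β), (c, e, some d') ∉ L₁) :
    ∀ p : ρ,
      variant B (L₁ ++ [(c₁, e, some d)] ++ L₂) p =
        variant (Function.update B e (some d))
          ((L₁.map (fun op =>
              if op.2.1 = e then ((fun q => op.1 q ∧ ¬ c₁ q), e, op.2.2) else op)) ++
            [((fun q => ¬ c₁ q), e, (none : Option β))] ++ L₂) p := by
  intro p
  apply aux_first_add p c₁ e d L₂ L₁
  · intro op hop hke
    rcases op with ⟨c, k, o⟩
    cases o with
    | none => rfl
    | some d' =>
      subst hke
      exact absurd hop (hL₁ c d')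
  · intro x hx
    simp [Function.update, hx]
  · exact hB
  · intro _
    simp [Function.update]
end

section
/- Increasing-monotonic refactoring theorem (correctness and no code duplication): for every base program B : α → Option β and every list L of conditional delta operations, there exist a base program B' and a list L' of conditional delta operations such that: (i) every operation of L' is an add (its payload is some d for some d); (ii) for every product p, variant B' L' p = variant B L p; (iii) L'.length ≤ L.length; (iv) for every reference k, B' k = B k or B' k = none; and (v) every operation (c', k, some d) of L' satisfies either (∃ c, (c, k, some d) ∈ L) or B k = some d. -/
open Classical in
lemma variant_cons {α β ρ : Type*} (B : α → Option β)
    (op : (ρ → Prop) × α × Option β) (L : List ((ρ → Prop) × α × Option β)) (p : ρ) :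
    variant B (op :: L) p =
      variant (if op.1 p then Function.update B op.2.1 op.2.2 else B) L p := by
  simp [variant, List.foldl_cons]

/-- The value of a variant at a key is either the base value or the payload of some
active operation on that key. -/
lemma variant_eq_base_or_payload {α β ρ : Type*}
    (L : List ((ρ → Prop) × α × Option β)) :
    ∀ (B : α → Option β) (p : ρ) (k : α),
      variant B L p k = B k ∨
        ∃ op ∈ L, op.1 p ∧ op.2.1 = k ∧ op.2.2 = variant B L p k := by
  classical
  induction L with
  | nil => intro B p k; left; rfl
  | cons a L ih =>
    intro B p k
    rw [variant_cons]
    rcases ih (if a.1 p then Function.update B a.2.1 a.2.2 else B) p k with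
      h | ⟨op, hmem, hact, hk, hpay⟩
    · by_cases hap : a.1 p
      · by_cases hkk : a.2.1 = k
        · right
          refine ⟨a, List.mem_cons_self, hap, hkk, ?_⟩
          rw [h, if_pos hap, hkk, Function.update_self]
        · left
          rw [h, if_pos hap, Function.update_of_ne (fun e => hkk e.symm)]
      · left; rw [h, if_neg hap]
    · right; exact ⟨op, List.mem_cons_of_mem _ hmem, hact, hk, hpay⟩

/-- If no operation on key `k` is active, the variant keeps the base value at `k`. -/
lemma variant_of_no_active {α β ρ : Type*}
    (L : List ((ρ → Prop) × α × Option β)) :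
    ∀ (B : α → Option β) (p : ρ) (k : α),
      (∀ op ∈ L, op.2.1 = k → ¬ op.1 p) → variant B L p k = B k := by
  classical
  induction L with
  | nil => intro B p k _; rfl
  | cons a L ih =>
    intro B p k h
    rw [variant_cons]
    rw [ih _ p k (fun op hm => h op (List.mem_cons_of_mem _ hm))]
    by_cases hap : a.1 p
    · by_cases hkk : a.2.1 = k
      · exact absurd hap (h a (List.mem_cons_self) hkk)
      · rw [if_pos hap, Function.update_of_ne (fun e => hkk e.symm)]
    · rw [if_neg hap]

/-- If all active operations on key `k` have payload `v` and at least one is active,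
the variant equals `v` at `k`. -/
lemma variant_of_const_active {α β ρ : Type*}
    (L : List ((ρ → Prop) × α × Option β)) (v : Option β) :
    ∀ (B : α → Option β) (p : ρ) (k : α),
      (∀ op ∈ L, op.2.1 = k → op.1 p → op.2.2 = v) →
      (∃ op ∈ L, op.2.1 = k ∧ op.1 p) →
      variant B L p k = v := by
  classical
  induction L with
  | nil => rintro B p k _ ⟨op, h, _⟩; exact absurd h (List.not_mem_nil)
  | cons a L ih =>
    intro B p k hall hex
    rw [variant_cons]
    by_cases hL : ∃ op ∈ L, op.2.1 = k ∧ op.1 p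
    · exact ih _ p k (fun op hm => hall op (List.mem_cons_of_mem _ hm)) hL
    · rcases hex with ⟨op, hmem, hk, hact⟩
      rcases List.mem_cons.mp hmem with rfl | hm
      · rw [variant_of_no_active L _ p k
          (fun op' hm' hk' hact' => hL ⟨op', hm', hk', hact'⟩)]
        rw [if_pos hact, ← hk, Function.update_self]
        exact hall op (List.mem_cons_self) hk hact
      · exact absurd ⟨op, hm, hk, hact⟩ hL

/-- Increasing-monotonic refactoring theorem: every SPL is equivalent to a
strictly-increasing monotonic one, without code duplication. -/
theorem increasing_refactoring {α β ρ : Type*} (B : α → Option β)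
    (L : List ((ρ → Prop) × α × Option β)) :
    ∃ (B' : α → Option β) (L' : List ((ρ → Prop) × α × Option β)),
      (∀ op ∈ L', ∃ d : β, op.2.2 = some d) ∧
      (∀ p : ρ, variant B' L' p = variant B L p) ∧
      L'.length ≤ L.length ∧
      (∀ k : α, B' k = B k ∨ B' k = none) ∧
      (∀ (c' : ρ → Prop) (k : α) (d : β), (c', k, some d) ∈ L' →
        (∃ c : ρ → Prop, (c, k, some d) ∈ L) ∨ B k = some d) := by
  classical
  -- new base: erase keys that can be removed
  refine ⟨fun k => if ∃ p, variant B L p k = none ∧ B k ≠ none then none else B k,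
    L.filterMap (fun op => (op.2.2.or (B op.2.1)).map
      (fun d => ((fun p => variant B L p op.2.1 = some d), op.2.1, some d))),
    ?_, ?_, List.length_filterMap_le _ _, ?_, ?_⟩
  · -- all operations are adds
    intro op hop
    rcases List.mem_filterMap.mp hop with ⟨a, _, ha⟩
    rcases ho : (a.2.2.or (B a.2.1)) with _ | d
    · rw [ho] at ha; simp at ha
    · rw [ho, Option.map_some] at ha
      injection ha with ha
      exact ⟨d, by rw [← ha]⟩
  · -- correctness
    intro p
    funext k
    -- every active op of L' on k has payload equal to the original variant value
    have hall : ∀ op ∈ L.filterMap (fun op => (op.2.2.or (B op.2.1)).map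
          (fun d => ((fun p => variant B L p op.2.1 = some d), op.2.1, some d))),
        op.2.1 = k → op.1 p → op.2.2 = variant B L p k := by
      intro op hop hk hact
      rcases List.mem_filterMap.mp hop with ⟨a, _, ha⟩
      rcases ho : (a.2.2.or (B a.2.1)) with _ | d
      · rw [ho] at ha; simp at ha
      · rw [ho, Option.map_some] at ha
        injection ha with ha
        subst ha
        simp only at hk hact ⊢
        rw [hk] at hact
        rw [← hact]
    by_cases hex : ∃ op ∈ L.filterMap (fun op => (op.2.2.or (B op.2.1)).map
        (fun d => ((fun p => variant B L p op.2.1 = some d), op.2.1, some d))),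
        op.2.1 = k ∧ op.1 p
    · exact variant_of_const_active _ _ _ p k hall hex
    · -- no active op in L' on k
      rw [variant_of_no_active _ _ p k (fun op hm hk hact => hex ⟨op, hm, hk, hact⟩)]
      -- helper: an op of L on k whose effective payload is the variant value would
      -- contradict hex
      have hnot : ∀ d : β, variant B L p k = some d →
          ∀ a ∈ L, a.2.1 = k → (a.2.2.or (B a.2.1)) = some d → False := by
        intro d hd a hmem hk ho
        refine hex ⟨((fun p => variant B L p a.2.1 = some d), a.2.1, some d), ?_, hk, ?_⟩
        · exact List.mem_filterMap.mpr ⟨a, hmem, by rw [ho, Option.map_some]⟩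
        · simpa [hk] using hd
      rcases hval : variant B L p k with _ | d
      · -- final value is none
        by_cases hc : ∃ p, variant B L p k = none ∧ B k ≠ none
        · rw [if_pos hc]
        · rw [if_neg hc]
          push_neg at hc
          exact hc p hval
      · -- final value is some d
        by_cases hc : ∃ p', variant B L p' k = none ∧ B k ≠ none
        · exfalso
          rcases variant_eq_base_or_payload L B p k with hbase | ⟨a, hmem, hact, hk, hpay⟩
          · rcases hc with ⟨p', hp', hBk⟩
            rcases variant_eq_base_or_payload L B p' k with
              hbase' | ⟨a, hmem', hact', hk', hpay'⟩
            · exact hBk (hbase' ▸ hp')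
            · have hanone : a.2.2 = none := by rw [hpay', hp']
              refine hnot d hval a hmem' hk' ?_
              rw [hanone, Option.none_or, hk', ← hbase, hval]
          · have h2 : a.2.2 = some d := by rw [hpay, hval]
            exact hnot d hval a hmem hk (by rw [h2]; rfl)
        · rw [if_neg hc]
          rcases variant_eq_base_or_payload L B p k with hbase | ⟨a, hmem, hact, hk, hpay⟩
          · rw [← hbase, hval]
          · exfalso
            have h2 : a.2.2 = some d := by rw [hpay, hval]
            exact hnot d hval a hmem hk (by rw [h2]; rfl)
  · -- base shrinks
    intro k
    by_cases hc : ∃ p, variant B L p k = none ∧ B k ≠ none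
    · right
      show (if ∃ p, variant B L p k = none ∧ B k ≠ none then none else B k) = none
      rw [if_pos hc]
    · left
      show (if ∃ p, variant B L p k = none ∧ B k ≠ none then none else B k) = B k
      rw [if_neg hc]
  · -- no code duplication
    intro c' k d hmem
    rcases List.mem_filterMap.mp hmem with ⟨a, hma, ha⟩
    rcases ho : (a.2.2.or (B a.2.1)) with _ | e
    · rw [ho] at ha; simp at ha
    · rw [ho, Option.map_some] at ha
      injection ha with ha
      simp only [Prod.mk.injEq] at ha
      obtain ⟨-, hk, hd⟩ := ha
      have hval : a.2.2.or (B a.2.1) = some d := by rw [ho]; exact hd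
      rcases ho2 : a.2.2 with _ | e'
      · right
        rw [ho2, Option.none_or] at hval
        rw [← hk]; exact hval
      · left
        rw [ho2] at hval
        have he : e' = d := by simpa using hval
        have ho3 : a.2.2 = some d := by rw [ho2, he]
        refine ⟨a.1, ?_⟩
        have heq : (a.1, k, some d) = a := by rw [← hk, ← ho3]
        exact heq ▸ hma
end

section
/- Decreasing-monotonic (readd) refactoring theorem (correctness and no code duplication): for every base program B : α → Option β and every list L of conditional delta operations, there exist a base program B' and a list L' of conditional delta operations such that: (i) for every product p, variant B' L' p = variant B L p; (ii) every operation of L' is either a remove (payload none) or a readd, i.e. an add (c, k, some d) whose reference satisfies B' k ≠ none; (iii) L'.length ≤ L.length; (iv) for every reference k, either B' k = B k, or B k = none and there exist c and d with (c, k, some d) ∈ L and B' k = some d; and (v) every add (c', k, some d) of L' satisfies ∃ c, (c, k, some d) ∈ L. -/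
open Classical in
lemma variant_append_singleton {α β ρ : Type*} (B : α → Option β)
    (L : List ((ρ → Prop) × α × Option β)) (op : (ρ → Prop) × α × Option β) (p : ρ) :
    variant B (L ++ [op]) p =
      if op.1 p then Function.update (variant B L p) op.2.1 op.2.2 else variant B L p := by
  simp [variant, List.foldl_append]

open Classical in
/-- Condition twist: replace each remove on `k` by the same remove restricted to `¬ c`. -/
noncomputable def tw {α β ρ : Type*} (k : α) (c : ρ → Prop)
    (op : (ρ → Prop) × α × Option β) : (ρ → Prop) × α × Option β :=
  if op.2.1 = k then ((fun q => op.1 q ∧ ¬ c q), k, (none : Option β)) else op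

open Classical in
lemma invariant {α β ρ : Type*} (k : α) (c : ρ → Prop) (d : β) (p : ρ) :
    ∀ (L : List ((ρ → Prop) × α × Option β)),
      (∀ op ∈ L, op.2.1 = k → op.2.2 = (none : Option β)) →
      ∀ (P Q : α → Option β), (∀ k', k' ≠ k → P k' = Q k') → Q k = none →
      (c p → P k = some d) →
      ((∀ k', k' ≠ k → variant P (L.map (tw k c)) p k' = variant Q L p k') ∧
       variant Q L p k = none ∧
       (c p → variant P (L.map (tw k c)) p k = some d)) := by
  intro L
  induction L with
  | nil =>
    intro _ P Q h1 h2 h3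
    exact ⟨fun k' hk' => h1 k' hk', h2, h3⟩
  | cons op L ih =>
    intro hL P Q h1 h2 h3
    have hLtail : ∀ op' ∈ L, op'.2.1 = k → op'.2.2 = (none : Option β) :=
      fun op' h => hL op' (List.mem_cons_of_mem _ h)
    rw [List.map_cons, variant_cons, variant_cons]
    by_cases hk : op.2.1 = k
    · have hop : op.2.2 = none := hL op List.mem_cons_self hk
      have htw : tw k c op = ((fun q => op.1 q ∧ ¬ c q), k, (none : Option β)) := by
        simp [tw, hk]
      rw [htw, hk, hop]
      apply ih hLtail
      · intro k' hk'
        split_ifs with ha hb hb <;>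
          simp [Function.update_of_ne hk', h1 k' hk']
      · split_ifs with ha
        · simp
        · exact h2
      · intro hc
        split_ifs with ha
        · exact absurd hc ha.2
        · exact h3 hc
    · have htw : tw k c op = op := by simp [tw, hk]
      have hke : k ≠ op.2.1 := fun h => hk h.symm
      rw [htw]
      apply ih hLtail
      · intro k' hk'
        split_ifs with ha
        · by_cases hx : k' = op.2.1
          · subst hx; simp
          · rw [Function.update_of_ne hx, Function.update_of_ne hx]
            exact h1 k' hk'
        · exact h1 k' hk'
      · split_ifs with ha
        · rw [Function.update_of_ne hke]; exact h2
        · exact h2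
      · intro hc
        split_ifs with ha
        · rw [Function.update_of_ne hke]; exact h3 hc
        · exact h3 hc

/-- Decreasing-monotonic (readd) refactoring theorem: every SPL is equivalent to a
readd-strictly-decreasing monotonic one, without code duplication. -/
theorem decreasing_refactoring {α β ρ : Type*} (B : α → Option β)
    (L : List ((ρ → Prop) × α × Option β)) :
    ∃ (B' : α → Option β) (L' : List ((ρ → Prop) × α × Option β)),
      (∀ p : ρ, variant B' L' p = variant B L p) ∧
      (∀ op ∈ L', op.2.2 = none ∨ (∃ d : β, op.2.2 = some d) ∧ B' op.2.1 ≠ none) ∧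
      L'.length ≤ L.length ∧
      (∀ k : α, B' k = B k ∨
        (B k = none ∧ ∃ (c : ρ → Prop) (d : β), (c, k, some d) ∈ L ∧ B' k = some d)) ∧
      (∀ (c' : ρ → Prop) (k : α) (d : β), (c', k, some d) ∈ L' →
        ∃ c : ρ → Prop, (c, k, some d) ∈ L) := by
  classical
  induction L using List.reverseRecOn with
  | nil =>
    exact ⟨B, [], fun p => rfl, by simp, by simp, fun k => Or.inl rfl, by simp⟩
  | append_singleton L op ih =>
    obtain ⟨B', L', h1, h2, h3, h4, h5⟩ := ih
    obtain ⟨c, k, o⟩ := op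
    match o with
    | none =>
      refine ⟨B', L' ++ [(c, k, none)], ?_, ?_, ?_, ?_, ?_⟩
      · intro p
        rw [variant_append_singleton, variant_append_singleton, h1]
      · intro op hop
        rcases List.mem_append.1 hop with h | h
        · exact h2 op h
        · simp at h; subst h; exact Or.inl rfl
      · simpa using Nat.succ_le_succ h3
      · intro k'
        rcases h4 k' with h | ⟨hB, c', d', hm, hB'⟩
        · exact Or.inl h
        · exact Or.inr ⟨hB, c', d', List.mem_append_left _ hm, hB'⟩
      · intro c' k' d' hm
        rcases List.mem_append.1 hm with h | h
        · obtain ⟨c₀, hc₀⟩ := h5 c' k' d' h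
          exact ⟨c₀, List.mem_append_left _ hc₀⟩
        · simp at h
    | some d =>
      by_cases hB' : B' k = none
      · -- hard case: readd a reference absent from B'
        have hL' : ∀ op ∈ L', op.2.1 = k → op.2.2 = (none : Option β) := by
          intro op hop hk
          rcases h2 op hop with h | ⟨_, hne⟩
          · exact h
          · rw [hk] at hne; exact absurd hB' hne
        have hBk : B k = none := by
          rcases h4 k with h | ⟨h, _⟩
          · rw [← h]; exact hB'
          · exact h
        refine ⟨Function.update B' k (some d),
          L'.map (tw k c) ++ [((fun q => ¬ c q), k, (none : Option β))],
          ?_, ?_, ?_, ?_, ?_⟩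
        · intro p
          have inv := invariant k c d p L' hL' (Function.update B' k (some d)) B'
            (fun k' hk' => Function.update_of_ne hk' _ _) hB'
            (fun _ => Function.update_self _ _ _)
          obtain ⟨ioff, iQ, iP⟩ := inv
          rw [variant_append_singleton, variant_append_singleton, ← h1 p]
          by_cases hc : c p
          · rw [if_neg (show ¬ (((fun q => ¬ c q, k, (none : Option β))) :
                (ρ → Prop) × α × Option β).1 p from not_not_intro hc),
              if_pos (show (((c, k, some d)) : (ρ → Prop) × α × Option β).1 p from hc)]
            funext x
            by_cases hx : x = k
            · rw [hx]
              show variant (Function.update B' k (some d)) (List.map (tw k c) L') p k =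
                Function.update (variant B' L' p) k (some d) k
              rw [Function.update_self]
              exact iP hc
            · show variant (Function.update B' k (some d)) (List.map (tw k c) L') p x =
                Function.update (variant B' L' p) k (some d) x
              rw [Function.update_of_ne hx]
              exact ioff x hx
          · rw [if_pos (show (((fun q => ¬ c q, k, (none : Option β))) :
                (ρ → Prop) × α × Option β).1 p from hc),
              if_neg (show ¬ (((c, k, some d)) : (ρ → Prop) × α × Option β).1 p from hc)]
            funext x
            by_cases hx : x = k
            · rw [hx]
              show Function.update (variant (Function.update B' k (some d))
                (List.map (tw k c) L') p) k none k = variant B' L' p k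
              rw [Function.update_self]
              exact iQ.symm
            · show Function.update (variant (Function.update B' k (some d))
                (List.map (tw k c) L') p) k none x = variant B' L' p x
              rw [Function.update_of_ne hx]
              exact ioff x hx
        · intro op hop
          rcases List.mem_append.1 hop with h | h
          · obtain ⟨op₀, hop₀, rfl⟩ := List.mem_map.1 h
            by_cases hk0 : op₀.2.1 = k
            · left; simp [tw, hk0]
            · have htw : tw k c op₀ = op₀ := by simp [tw, hk0]
              rw [htw]
              rcases h2 op₀ hop₀ with h | ⟨hd, hne⟩
              · exact Or.inl h
              · exact Or.inr ⟨hd, by rwa [Function.update_of_ne hk0]⟩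
          · simp at h; subst h; exact Or.inl rfl
        · simp only [List.length_append, List.length_map, List.length_singleton]
          omega
        · intro k'
          by_cases hk' : k' = k
          · subst hk'
            exact Or.inr ⟨hBk, c, d,
              List.mem_append_right _ (List.mem_singleton_self _),
              Function.update_self _ _ _⟩
          · rw [Function.update_of_ne hk']
            rcases h4 k' with h | ⟨hB, c₀, d₀, hm, hB₀⟩
            · exact Or.inl h
            · exact Or.inr ⟨hB, c₀, d₀, List.mem_append_left _ hm, hB₀⟩
        · intro c' k' d' hm
          rcases List.mem_append.1 hm with h | h
          · obtain ⟨op₀, hop₀, heq⟩ := List.mem_map.1 h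
            by_cases hk0 : op₀.2.1 = k
            · exfalso
              have : (tw k c op₀).2.2 = (none : Option β) := by simp [tw, hk0]
              rw [heq] at this; simp at this
            · have htw : tw k c op₀ = op₀ := by simp [tw, hk0]
              rw [htw] at heq; subst heq
              obtain ⟨c₀, hc₀⟩ := h5 c' k' d' hop₀
              exact ⟨c₀, List.mem_append_left _ hc₀⟩
          · simp at h
      · -- easy case: it's already a readd
        refine ⟨B', L' ++ [(c, k, some d)], ?_, ?_, ?_, ?_, ?_⟩
        · intro p
          rw [variant_append_singleton, variant_append_singleton, h1]
        · intro op hop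
          rcases List.mem_append.1 hop with h | h
          · exact h2 op h
          · simp at h; subst h
            exact Or.inr ⟨⟨d, rfl⟩, hB'⟩
        · simpa using Nat.succ_le_succ h3
        · intro k'
          rcases h4 k' with h | ⟨hB, c₀, d₀, hm, hB₀⟩
          · exact Or.inl h
          · exact Or.inr ⟨hB, c₀, d₀, List.mem_append_left _ hm, hB₀⟩
        · intro c' k' d' hm
          rcases List.mem_append.1 hm with h | h
          · obtain ⟨c₀, hc₀⟩ := h5 c' k' d' h
            exact ⟨c₀, List.mem_append_left _ hc₀⟩
          · simp at h
            exact ⟨c, by rw [h.2.1, h.2.2]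
                         exact List.mem_append_right _ (List.mem_singleton_self _)⟩
end
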